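/- If (R, m) is a local ring, I is an ideal of R, and v ∈ Um_n(R, I) is a unimodular row congruent to e_1 = (1,0,…,0) modulo I, then v = e_1·β for some β ∈ E_n(R, I). -/

import Mathlib

open Matrix

variable (n : ℕ) (R : Type*) [CommRing R]

/-- The elementary linear group E_n(R) ⊆ GL_n(R), generated by the elementary
matrices E_{ij}(x) = I + x e_{ij}, i ≠ j. -/
def elemGroup : Subgroup (GL (Fin n) R) :=
  Subgroup.closure {g | ∃ i j : Fin n, ∃ x : R, i ≠ j ∧
    (g : Matrix (Fin n) (Fin n) R) = Matrix.transvection i j x}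

/-- The group E_n(I), generated by elementary matrices with parameter in the ideal I. -/
def elemGroupI (I : Ideal R) : Subgroup (GL (Fin n) R) :=
  Subgroup.closure {g | ∃ i j : Fin n, ∃ x : R, i ≠ j ∧ x ∈ I ∧
    (g : Matrix (Fin n) (Fin n) R) = Matrix.transvection i j x}

/-- The relative elementary group E_n(R, I): the normal closure of E_n(I) in E_n(R). -/
def elemGroupRel (I : Ideal R) : Subgroup (GL (Fin n) R) :=
  Subgroup.closure {g | ∃ e ∈ elemGroup n R, ∃ h ∈ elemGroupI n R I, g = e * h * e⁻¹}

namespace ElemAux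

variable {n R}

/-- Transvection as an element of GL. -/
def tGL (i j : Fin n) (hij : i ≠ j) (c : R) : GL (Fin n) R :=
  ⟨Matrix.transvection i j c, Matrix.transvection i j (-c),
   by rw [Matrix.transvection_mul_transvection_same _ _ hij, add_neg_cancel,
     Matrix.transvection_zero],
   by rw [Matrix.transvection_mul_transvection_same _ _ hij, neg_add_cancel,
     Matrix.transvection_zero]⟩

lemma tGL_val (i j : Fin n) (hij : i ≠ j) (c : R) :
    (tGL i j hij c : Matrix (Fin n) (Fin n) R) = Matrix.transvection i j c := rfl

lemma tGL_inv (i j : Fin n) (hij : i ≠ j) (c : R) :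
    (tGL i j hij c)⁻¹ = tGL i j hij (-c) := Units.ext rfl

lemma tGL_mem_elemGroup (i j : Fin n) (hij : i ≠ j) (c : R) :
    tGL i j hij c ∈ elemGroup n R :=
  Subgroup.subset_closure ⟨i, j, c, hij, rfl⟩

lemma tGL_mem_elemGroupI {I : Ideal R} (i j : Fin n) (hij : i ≠ j) {c : R} (hc : c ∈ I) :
    tGL i j hij c ∈ elemGroupI n R I :=
  Subgroup.subset_closure ⟨i, j, c, hij, hc, rfl⟩

lemma elemGroupI_le_rel (I : Ideal R) : elemGroupI n R I ≤ elemGroupRel n R I := by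
  intro g hg
  exact Subgroup.subset_closure ⟨1, one_mem _, g, hg, by group⟩

lemma conj_mem_rel {I : Ideal R} {e h : GL (Fin n) R} (he : e ∈ elemGroup n R)
    (hh : h ∈ elemGroupI n R I) : e * h * e⁻¹ ∈ elemGroupRel n R I :=
  Subgroup.subset_closure ⟨e, he, h, hh, rfl⟩

lemma vecMul_transvection (v : Fin n → R) (i j : Fin n) (c : R) :
    v ᵥ* Matrix.transvection i j c = fun k => v k + if k = j then v i * c else 0 := by
  funext k
  rw [Matrix.transvection, Matrix.vecMul_add, Matrix.vecMul_one]
  show v k + ∑ l, v l * Matrix.single i j c l k = _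
  congr 1
  rcases eq_or_ne k j with rfl | hk
  · rw [Finset.sum_eq_single i]
    · simp
    · intro b _ hb
      rw [Matrix.single_apply_of_ne i k c b k (by tauto), mul_zero]
    · simp
  · rw [if_neg hk]
    apply Finset.sum_eq_zero
    intro b _
    rw [Matrix.single_apply_of_ne i j c b k (by tauto), mul_zero]

/-- Clearing all entries indexed by `s` (not containing the pivot `i0`) using elementary
matrices with parameters in `I`. -/
lemma clear_tail {I : Ideal R} (i0 : Fin n) {u uinv : R} (huu : u * uinv = 1)
    (s : Finset (Fin n)) (hi0 : i0 ∉ s) :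
    ∀ v : Fin n → R, v i0 = u → (∀ j, j ≠ i0 → v j ∈ I) →
    ∃ ε ∈ elemGroupI n R I,
      v ᵥ* (ε : Matrix (Fin n) (Fin n) R) = fun k => if k ∈ s then 0 else v k := by
  classical
  induction s using Finset.induction_on with
  | empty =>
    intro v hv0 _
    exact ⟨1, one_mem _, by simp⟩
  | @insert j s hj ih =>
    intro v hv0 hvI
    have hji0 : j ≠ i0 := fun h => hi0 (h ▸ Finset.mem_insert_self j s)
    have hs : i0 ∉ s := fun h => hi0 (Finset.mem_insert_of_mem h)
    set v' : Fin n → R := v ᵥ* Matrix.transvection i0 j (-(v j) * uinv) with hv'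
    have hv'eq : v' = fun k => v k + if k = j then v i0 * (-(v j) * uinv) else 0 :=
      vecMul_transvection v i0 j _
    have hv'j : v' j = 0 := by
      have h1 := congrFun hv'eq j
      rw [h1, if_pos rfl, hv0]
      linear_combination (-(v j)) * huu
    have hv'ne : ∀ k, k ≠ j → v' k = v k := by
      intro k hk; rw [hv'eq]; simp [hk]
    have hv'0 : v' i0 = u := by rw [hv'ne i0 (Ne.symm hji0), hv0]
    have hv'I : ∀ k, k ≠ i0 → v' k ∈ I := by
      intro k hk
      rcases eq_or_ne k j with rfl | hkj
      · rw [hv'j]; exact zero_mem I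
      · rw [hv'ne k hkj]; exact hvI k hk
    obtain ⟨ε, hε, hεrow⟩ := ih hs v' hv'0 hv'I
    refine ⟨tGL i0 j (Ne.symm hji0) (-(v j) * uinv) * ε, ?_, ?_⟩
    · exact mul_mem (tGL_mem_elemGroupI i0 j (Ne.symm hji0)
        (I.mul_mem_right _ (I.neg_mem (hvI j hji0)))) hε
    · have : ((tGL i0 j (Ne.symm hji0) (-(v j) * uinv) * ε : GL (Fin n) R) :
          Matrix (Fin n) (Fin n) R)
          = Matrix.transvection i0 j (-(v j) * uinv) * (ε : Matrix (Fin n) (Fin n) R) := rfl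
      rw [this, ← Matrix.vecMul_vecMul, ← hv', hεrow]
      funext k
      rcases eq_or_ne k j with rfl | hkj
      · simp [hj, hv'j]
      · by_cases hks : k ∈ s
        · simp [hks, Finset.mem_insert_of_mem hks]
        · have : k ∉ insert j s := by simp [hkj, hks]
          simp [hks, this, hv'ne k hkj]

end ElemAux

open ElemAux in
theorem unimodular_row_elementary_completion_local
    {R : Type*} [CommRing R] [IsLocalRing R] (I : Ideal R)
    (n : ℕ) (hn : 2 ≤ n) (v : Fin n → R)
    (hv : ∃ w : Fin n → R, ∑ i, v i * w i = 1)
    (hv0 : v ⟨0, by omega⟩ - 1 ∈ I)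
    (hvi : ∀ i : Fin n, i ≠ ⟨0, by omega⟩ → v i ∈ I) :
    ∃ β ∈ elemGroupRel n R I,
      v = (β : Matrix (Fin n) (Fin n) R) ⟨0, by omega⟩ := by
  classical
  obtain ⟨w, hw⟩ := hv
  have hn0 : 0 < n := by omega
  have hn1 : 1 < n := by omega
  let i0 : Fin n := ⟨0, hn0⟩
  let i1 : Fin n := ⟨1, hn1⟩
  have hi01 : i0 ≠ i1 := by simp [i0, i1, Fin.ext_iff]
  have h10 : i1 ≠ i0 := hi01.symm
  have hv0' : v i0 - 1 ∈ I := hv0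
  have hvi' : ∀ i : Fin n, i ≠ i0 → v i ∈ I := hvi
  -- some coordinate is a unit
  have hunit : ∃ k, IsUnit (v k) := by
    by_contra hc
    push_neg at hc
    have h1 : (1 : R) ∈ IsLocalRing.maximalIdeal R := by
      rw [← hw]
      refine Ideal.sum_mem _ fun k _ => ?_
      rw [IsLocalRing.mem_maximalIdeal, mem_nonunits_iff]
      exact fun h => hc k (isUnit_of_mul_isUnit_left h)
    exact (Ideal.ne_top_iff_one _).mp (IsLocalRing.maximalIdeal.isMaximal R).ne_top h1
  -- Step 0: arrange that the 0-th coordinate is a unit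
  have step0 : ∃ ε0 ∈ elemGroupI n R I,
      IsUnit ((v ᵥ* (ε0 : Matrix (Fin n) (Fin n) R)) i0) ∧
      (v ᵥ* (ε0 : Matrix (Fin n) (Fin n) R)) i0 - 1 ∈ I ∧
      ∀ j, j ≠ i0 → (v ᵥ* (ε0 : Matrix (Fin n) (Fin n) R)) j ∈ I := by
    by_cases h0 : IsUnit (v i0)
    · exact ⟨1, one_mem _, by simpa using h0, by simpa using hv0',
        fun j hj => by simpa using hvi' j hj⟩
    · obtain ⟨k, hk⟩ := hunit
      have hki0 : k ≠ i0 := fun h => h0 (h ▸ hk)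
      have htop : I = ⊤ := Ideal.eq_top_of_isUnit_mem I (hvi' k hki0) hk
      obtain ⟨c, hc⟩ : ∃ c, v k * c = 1 := ⟨↑hk.unit⁻¹, hk.mul_val_inv⟩
      refine ⟨tGL k i0 hki0 ((1 - v i0) * c),
        tGL_mem_elemGroupI k i0 hki0 (htop ▸ trivial), ?_, ?_, ?_⟩
      · rw [tGL_val, vecMul_transvection]
        show IsUnit (v i0 + if i0 = i0 then v k * ((1 - v i0) * c) else 0)
        rw [if_pos rfl]
        have h2 : v i0 + v k * ((1 - v i0) * c) = 1 := by linear_combination (1 - v i0) * hc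
        rw [h2]; exact isUnit_one
      · rw [tGL_val, vecMul_transvection]
        show v i0 + (if i0 = i0 then v k * ((1 - v i0) * c) else 0) - 1 ∈ I
        rw [if_pos rfl]
        have h2 : v i0 + v k * ((1 - v i0) * c) = 1 := by linear_combination (1 - v i0) * hc
        rw [h2]; simp
      · intro j hj
        rw [tGL_val, vecMul_transvection]
        show v j + (if j = i0 then v k * ((1 - v i0) * c) else 0) ∈ I
        rw [if_neg hj, add_zero]
        exact hvi' j hj
  obtain ⟨ε0, hε0, hu, haI', hI'⟩ := step0
  -- notation
  obtain ⟨uu, huu'⟩ := hu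
  obtain ⟨uinv, huinv⟩ : ∃ uinv, (v ᵥ* (ε0 : Matrix (Fin n) (Fin n) R)) i0 * uinv = 1 :=
    ⟨↑uu⁻¹, by rw [← huu']; exact uu.mul_inv⟩
  -- Step 1: clear the tail
  obtain ⟨ε1, hε1, hε1row⟩ := clear_tail (I := I) i0 huinv (Finset.univ.erase i0)
    (Finset.notMem_erase i0 _) (v ᵥ* (ε0 : Matrix (Fin n) (Fin n) R)) rfl hI'
  -- abbreviations
  set u : R := (v ᵥ* (ε0 : Matrix (Fin n) (Fin n) R)) i0 with hudef
  have hW : (v ᵥ* (ε0 : Matrix (Fin n) (Fin n) R)) ᵥ* (ε1 : Matrix (Fin n) (Fin n) R)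
      = fun k => if k = i0 then u else 0 := by
    rw [hε1row]
    funext k
    rcases eq_or_ne k i0 with rfl | hk
    · simp [hudef]
    · simp [Finset.mem_erase, hk]
  have ha : u - 1 ∈ I := haI'
  have hxI : (u - 1) * uinv ∈ I := I.mul_mem_right _ ha
  -- the four final transvections
  have e1 : ((fun k => if k = i0 then u else 0 : Fin n → R) ᵥ*
      Matrix.transvection i1 i0 (1 : R)) = fun k => if k = i0 then u else 0 := by
    rw [vecMul_transvection]
    funext k
    rcases eq_or_ne k i0 with rfl | hk
    · simp [h10]
    · simp [hk]
  have e2 : ((fun k => if k = i0 then u else 0 : Fin n → R) ᵥ*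
      Matrix.transvection i0 i1 ((u - 1) * uinv)) =
      fun k => if k = i0 then u else if k = i1 then u - 1 else 0 := by
    rw [vecMul_transvection]
    funext k
    rcases eq_or_ne k i0 with rfl | hk
    · simp [hi01]
    · rcases eq_or_ne k i1 with rfl | hk1
      · rw [if_neg hk, if_pos rfl, if_pos rfl, if_neg hk, if_pos rfl, zero_add]
        linear_combination (u - 1) * huinv
      · simp [hk, hk1]
  have e3 : ((fun k => if k = i0 then u else if k = i1 then u - 1 else 0 : Fin n → R) ᵥ*
      Matrix.transvection i1 i0 (-1 : R)) =
      fun k => if k = i0 then 1 else if k = i1 then u - 1 else 0 := by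
    rw [vecMul_transvection]
    funext k
    rcases eq_or_ne k i0 with rfl | hk
    · rw [if_pos rfl, if_pos rfl, if_pos rfl, if_neg h10, if_pos rfl]
      ring
    · simp [hk]
  have e4 : ((fun k => if k = i0 then 1 else if k = i1 then u - 1 else 0 : Fin n → R) ᵥ*
      Matrix.transvection i0 i1 (-(u - 1))) = Pi.single i0 1 := by
    rw [vecMul_transvection]
    funext k
    rcases eq_or_ne k i0 with rfl | hk
    · simp [hi01]
    · rcases eq_or_ne k i1 with rfl | hk1
      · simp [hk, hi01]
      · simp [hk, hk1, Pi.single_apply]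
  -- assemble the group element
  refine ⟨(ε0 * ε1 * (tGL i1 i0 h10 1 * tGL i0 i1 hi01 ((u - 1) * uinv) *
      (tGL i1 i0 h10 1)⁻¹ * tGL i0 i1 hi01 (-(u - 1))))⁻¹, ?_, ?_⟩
  · refine inv_mem (mul_mem (mul_mem (elemGroupI_le_rel I hε0) (elemGroupI_le_rel I hε1)) ?_)
    exact mul_mem (conj_mem_rel (tGL_mem_elemGroup i1 i0 h10 1)
        (tGL_mem_elemGroupI i0 i1 hi01 hxI))
      (elemGroupI_le_rel I (tGL_mem_elemGroupI i0 i1 hi01 (I.neg_mem ha)))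
  · set ε : GL (Fin n) R := ε0 * ε1 * (tGL i1 i0 h10 1 * tGL i0 i1 hi01 ((u - 1) * uinv) *
      (tGL i1 i0 h10 1)⁻¹ * tGL i0 i1 hi01 (-(u - 1))) with hεdef
    have hval : (ε : Matrix (Fin n) (Fin n) R) =
        (ε0 : Matrix (Fin n) (Fin n) R) * (ε1 : Matrix (Fin n) (Fin n) R) *
        (Matrix.transvection i1 i0 (1 : R) * Matrix.transvection i0 i1 ((u - 1) * uinv) *
         Matrix.transvection i1 i0 (-1 : R) * Matrix.transvection i0 i1 (-(u - 1))) := by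
      rw [hεdef, tGL_inv]
      rfl
    have hεrow : v ᵥ* (ε : Matrix (Fin n) (Fin n) R) = Pi.single i0 1 := by
      rw [hval]
      simp only [← Matrix.vecMul_vecMul]
      rw [hW, e1, e2, e3, e4]
    have hfinal : v = (Pi.single i0 1 : Fin n → R) ᵥ*
        ((ε⁻¹ : GL (Fin n) R) : Matrix (Fin n) (Fin n) R) := by
      rw [← hεrow, Matrix.vecMul_vecMul]
      have h1 : (ε : Matrix (Fin n) (Fin n) R) *
          ((ε⁻¹ : GL (Fin n) R) : Matrix (Fin n) (Fin n) R) = 1 := by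
        rw [← Units.val_mul, mul_inv_cancel, Units.val_one]
      rw [h1, Matrix.vecMul_one]
    rw [hfinal, Matrix.single_one_vecMul]; rfl
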